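/- For any set system D = ([n], F) and subset I ⊆ [n], a set X is feasible in D \bar{*} I if and only if the number of Y ∈ F with X ⊆ Y ⊆ X ∪ I is odd. -/

import Mathlib

open scoped symmDiff

/-- The operation `\bar{∗} i`, with feasible sets `F ∆ {I \ {i} : I ∈ F, i ∈ I}`. -/
def barStar {n : ℕ} (F : Finset (Finset (Fin n))) (i : Fin n) : Finset (Finset (Fin n)) :=
  F ∆ ((F.filter (fun I => i ∈ I)).image (fun I => I.erase i))

/-- `D \bar{∗} I`: the operation applied successively on each element of `I`. -/
noncomputable def barStarSet {n : ℕ} (F : Finset (Finset (Fin n))) (I : Finset (Fin n)) :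
    Finset (Finset (Fin n)) :=
  I.toList.foldl barStar F

namespace BarStarAux

variable {n : ℕ}

lemma mem_image_erase {F : Finset (Finset (Fin n))} {i : Fin n} {Y : Finset (Fin n)} :
    Y ∈ (F.filter (fun I => i ∈ I)).image (fun I => I.erase i) ↔ i ∉ Y ∧ insert i Y ∈ F := by
  simp only [Finset.mem_image, Finset.mem_filter]
  constructor
  · rintro ⟨Z, ⟨hZ, hiZ⟩, rfl⟩
    refine ⟨Finset.notMem_erase _ _, ?_⟩
    rwa [Finset.insert_erase hiZ]
  · rintro ⟨hiY, hY⟩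
    exact ⟨insert i Y, ⟨hY, Finset.mem_insert_self _ _⟩, by rw [Finset.erase_insert hiY]⟩

lemma mem_barStar_of_mem {F : Finset (Finset (Fin n))} {i : Fin n} {Y : Finset (Fin n)}
    (hi : i ∈ Y) : Y ∈ barStar F i ↔ Y ∈ F := by
  rw [barStar, Finset.mem_symmDiff]
  have : ¬ (Y ∈ (F.filter (fun I => i ∈ I)).image (fun I => I.erase i)) := by
    rw [mem_image_erase]; tauto
  tauto

lemma box_eq (F : Finset (Finset (Fin n))) (I X : Finset (Fin n)) :
    F.filter (fun Y => X ⊆ Y ∧ Y ⊆ X ∪ I) = (Finset.Icc X (X ∪ I)).filter (· ∈ F) := by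
  ext Y
  simp only [Finset.mem_filter, Finset.mem_Icc, Finset.le_iff_subset]
  tauto

/-- counting as a `ZMod 2` sum over the box -/
lemma cnt_cast (F : Finset (Finset (Fin n))) (I X : Finset (Fin n)) :
    ((F.filter (fun Y => X ⊆ Y ∧ Y ⊆ X ∪ I)).card : ZMod 2)
      = ∑ Y ∈ Finset.Icc X (X ∪ I), if Y ∈ F then (1 : ZMod 2) else 0 := by
  rw [box_eq, Finset.card_filter]
  push_cast
  rfl

lemma icc_not_mem {i : Fin n} {X I Y : Finset (Fin n)} (hiX : i ∉ X) (hiI : i ∉ I)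
    (hY : Y ∈ Finset.Icc X (X ∪ I)) : i ∉ Y := by
  rw [Finset.mem_Icc] at hY
  intro hiY
  rcases Finset.mem_union.mp (hY.2 hiY) with h | h
  · exact hiX h
  · exact hiI h

lemma filter_not_mem_icc {i : Fin n} {X I : Finset (Fin n)} (hiX : i ∉ X) (hiI : i ∉ I) :
    (Finset.Icc X (X ∪ insert i I)).filter (fun Y => i ∉ Y) = Finset.Icc X (X ∪ I) := by
  ext Y
  simp only [Finset.mem_filter, Finset.mem_Icc, Finset.le_iff_subset]
  constructor
  · rintro ⟨⟨h1, h2⟩, h3⟩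
    refine ⟨h1, fun a ha => ?_⟩
    rcases Finset.mem_union.mp (h2 ha) with h | h
    · exact Finset.mem_union_left _ h
    · rcases Finset.mem_insert.mp h with rfl | h
      · exact absurd ha h3
      · exact Finset.mem_union_right _ h
  · rintro ⟨h1, h2⟩
    exact ⟨⟨h1, h2.trans (Finset.union_subset_union_right (Finset.subset_insert _ _))⟩,
      icc_not_mem hiX hiI (Finset.mem_Icc.mpr ⟨h1, h2⟩)⟩

lemma filter_mem_icc {i : Fin n} {X I : Finset (Fin n)} (hiX : i ∉ X) (hiI : i ∉ I) :
    (Finset.Icc X (X ∪ insert i I)).filter (fun Y => i ∈ Y)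
      = (Finset.Icc X (X ∪ I)).image (insert i) := by
  ext Y
  simp only [Finset.mem_filter, Finset.mem_Icc, Finset.le_iff_subset, Finset.mem_image]
  constructor
  · rintro ⟨⟨h1, h2⟩, h3⟩
    refine ⟨Y.erase i, ⟨?_, ?_⟩, Finset.insert_erase h3⟩
    · intro a ha
      exact Finset.mem_erase.mpr ⟨fun h => hiX (h ▸ ha), h1 ha⟩
    · intro a ha
      have := h2 (Finset.erase_subset _ _ ha)
      rcases Finset.mem_union.mp this with h | h
      · exact Finset.mem_union_left _ h
      · rcases Finset.mem_insert.mp h with rfl | h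
        · exact absurd rfl (Finset.mem_erase.mp ha).1
        · exact Finset.mem_union_right _ h
  · rintro ⟨Z, ⟨h1, h2⟩, rfl⟩
    refine ⟨⟨h1.trans (Finset.subset_insert _ _), ?_⟩, Finset.mem_insert_self _ _⟩
    intro a ha
    rcases Finset.mem_insert.mp ha with rfl | ha
    · exact Finset.mem_union_right _ (Finset.mem_insert_self _ _)
    · rcases Finset.mem_union.mp (h2 ha) with h | h
      · exact Finset.mem_union_left _ h
      · exact Finset.mem_union_right _ (Finset.mem_insert_of_mem h)

/-- The key parity step. -/
lemma parity_step (F : Finset (Finset (Fin n))) (i : Fin n) (I X : Finset (Fin n))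
    (hiI : i ∉ I) :
    (((barStar F i).filter (fun Y => X ⊆ Y ∧ Y ⊆ X ∪ I)).card : ZMod 2)
      = ((F.filter (fun Y => X ⊆ Y ∧ Y ⊆ X ∪ insert i I)).card : ZMod 2) := by
  by_cases hiX : i ∈ X
  · have hU : X ∪ insert i I = X ∪ I := by
      ext a
      simp only [Finset.mem_union, Finset.mem_insert]
      constructor
      · rintro (h | rfl | h) <;> [exact Or.inl h; exact Or.inl hiX; exact Or.inr h]
      · rintro (h | h) <;> [exact Or.inl h; exact Or.inr (Or.inr h)]
    rw [hU, cnt_cast, cnt_cast]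
    refine Finset.sum_congr rfl (fun Y hY => ?_)
    have hiY : i ∈ Y := (Finset.mem_Icc.mp hY).1 hiX
    simp only [mem_barStar_of_mem hiY]
  · rw [cnt_cast, cnt_cast]
    -- split RHS sum by whether `i ∈ Y`
    rw [← Finset.sum_filter_add_sum_filter_not (Finset.Icc X (X ∪ insert i I)) (fun Y => i ∈ Y),
      filter_mem_icc hiX hiI, filter_not_mem_icc hiX hiI]
    have himage : ∑ Y ∈ (Finset.Icc X (X ∪ I)).image (insert i),
        (if Y ∈ F then (1 : ZMod 2) else 0)
        = ∑ Y ∈ Finset.Icc X (X ∪ I), (if insert i Y ∈ F then (1 : ZMod 2) else 0) := by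
      refine Finset.sum_image (fun Y hY Z hZ h => ?_)
      have hY' := icc_not_mem hiX hiI hY
      have hZ' := icc_not_mem hiX hiI hZ
      have := congrArg (fun s => Finset.erase s i) h
      simpa [Finset.erase_insert hY', Finset.erase_insert hZ'] using this
    rw [himage, ← Finset.sum_add_distrib]
    refine Finset.sum_congr rfl (fun Y hY => ?_)
    have hiY : i ∉ Y := icc_not_mem hiX hiI hY
    have hmem : Y ∈ barStar F i ↔ ((Y ∈ F ∧ insert i Y ∉ F) ∨ (insert i Y ∈ F ∧ Y ∉ F)) := by
      rw [barStar, Finset.mem_symmDiff, mem_image_erase]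
      tauto
    by_cases h1 : Y ∈ F <;> by_cases h2 : insert i Y ∈ F <;>
      simp [hmem, h1, h2] <;> decide

lemma foldl_mem (l : List (Fin n)) (hl : l.Nodup) (F : Finset (Finset (Fin n)))
    (X : Finset (Fin n)) :
    X ∈ l.foldl barStar F ↔ Odd ((F.filter (fun Y => X ⊆ Y ∧ Y ⊆ X ∪ l.toFinset)).card) := by
  induction l generalizing F with
  | nil =>
    simp only [List.foldl_nil, List.toFinset_nil, Finset.union_empty]
    have : F.filter (fun Y => X ⊆ Y ∧ Y ⊆ X) = if X ∈ F then {X} else ∅ := by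
      split <;> rename_i h
      · ext Y
        simp only [Finset.mem_filter, Finset.mem_singleton]
        constructor
        · rintro ⟨_, h1, h2⟩; exact Finset.Subset.antisymm h2 h1
        · rintro rfl; exact ⟨h, subset_rfl, subset_rfl⟩
      · ext Y
        simp only [Finset.mem_filter, Finset.notMem_empty, iff_false, not_and]
        intro hY h1 h2
        exact h (Finset.Subset.antisymm h2 h1 ▸ hY)
    rw [this]
    split <;> rename_i h <;> simp [h]
  | cons i l ih =>
    rw [List.foldl_cons, ih (List.nodup_cons.mp hl).2, ← ZMod.natCast_eq_one_iff_odd,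
      ← ZMod.natCast_eq_one_iff_odd, parity_step F i l.toFinset X
        (by simpa using (List.nodup_cons.mp hl).1), List.toFinset_cons]

end BarStarAux

/-- `X` is feasible in `D \bar{∗} I` iff the number of `Y ∈ F` with `X ⊆ Y ⊆ X ∪ I` is odd. -/
theorem mem_barStarSet_iff_odd {n : ℕ} (F : Finset (Finset (Fin n))) (I : Finset (Fin n))
    (X : Finset (Fin n)) :
    X ∈ barStarSet F I ↔ Odd (F.filter (fun Y => X ⊆ Y ∧ Y ⊆ X ∪ I)).card := by
  have := BarStarAux.foldl_mem I.toList I.nodup_toList F X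
  rwa [Finset.toList_toFinset] at this
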